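/- In the setting of composing Lagrangians (W₀, W₁, W₂ complex Hilbert spaces with real structures, L₀₁, L₁₂ Lagrangians), with W = W₀ ⊕ (−W₁) ⊕ W₁ ⊕ (−W₂), L = L₀₁ ⊕ L₁₂, U = {(0,w,w,0) : w ∈ W₁}, L_σ = ker(σ) ∩ L, and P_L the orthogonal projection onto L: the subspace P_L(Ū) is orthogonal to L_σ, and the closure of P_L(Ū) equals L_σ^⊥ ∩ L. -/

import Mathlib

noncomputable section

/-- A real structure on a complex inner product space: an anti-unitary involution `v ↦ v̄`. -/
structure RealStructure (W : Type*) [NormedAddCommGroup W] [InnerProductSpace ℂ W] where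
  conj : W → W
  map_add : ∀ v w : W, conj (v + w) = conj v + conj w
  map_smul : ∀ (c : ℂ) (v : W), conj (c • v) = (starRingEnd ℂ) c • conj v
  invol : ∀ v : W, conj (conj v) = v
  inner_conj : ∀ v w : W, (inner ℂ (conj v) (conj w) : ℂ) = (starRingEnd ℂ) (inner ℂ v w : ℂ)

/-- The real structure of `A ⊕ (−B)`. -/
def pairConj {A B : Type*} [NormedAddCommGroup A] [InnerProductSpace ℂ A]
    [NormedAddCommGroup B] [InnerProductSpace ℂ B]
    (rA : RealStructure A) (rB : RealStructure B) : A × B → A × B :=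
  fun p => (rA.conj p.1, -rB.conj p.2)

/-- The Hermitian inner product of `A ⊕ B`. -/
def pairInner {A B : Type*} [NormedAddCommGroup A] [InnerProductSpace ℂ A]
    [NormedAddCommGroup B] [InnerProductSpace ℂ B] (x y : A × B) : ℂ :=
  (inner ℂ x.1 y.1 : ℂ) + (inner ℂ x.2 y.2 : ℂ)

/-- A Lagrangian `L ⊆ A ⊕ (−B)`. -/
def IsLagrangianPair {A B : Type*} [NormedAddCommGroup A] [InnerProductSpace ℂ A]
    [NormedAddCommGroup B] [InnerProductSpace ℂ B]
    (rA : RealStructure A) (rB : RealStructure B) (L : Submodule ℂ (A × B)) : Prop :=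
  pairConj rA rB '' (L : Set (A × B)) = {y : A × B | ∀ x ∈ L, pairInner x y = 0}

section Aux

variable {A B : Type*} [NormedAddCommGroup A] [InnerProductSpace ℂ A]
  [NormedAddCommGroup B] [InnerProductSpace ℂ B]

lemma RealStructure.conj_neg (r : RealStructure A) (v : A) : r.conj (-v) = -(r.conj v) := by
  have h := r.map_smul (-1) v
  simpa using h

lemma RealStructure.conj_sub (r : RealStructure A) (v w : A) :
    r.conj (v - w) = r.conj v - r.conj w := by
  rw [sub_eq_add_neg, r.map_add, r.conj_neg, sub_eq_add_neg]

lemma RealStructure.norm_conj (r : RealStructure A) (v : A) : ‖r.conj v‖ = ‖v‖ := by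
  have h : (inner ℂ (r.conj v) (r.conj v) : ℂ) = inner ℂ v v := by
    rw [r.inner_conj v v, inner_conj_symm]
  rw [inner_self_eq_norm_sq_to_K, inner_self_eq_norm_sq_to_K] at h
  have h2 : ‖r.conj v‖ ^ 2 = ‖v‖ ^ 2 := by exact_mod_cast h
  rw [← Real.sqrt_sq (norm_nonneg (r.conj v)), ← Real.sqrt_sq (norm_nonneg v), h2]

lemma RealStructure.isometry_conj (r : RealStructure A) : Isometry r.conj := by
  refine Isometry.of_dist_eq fun x y => ?_
  rw [dist_eq_norm, dist_eq_norm, ← r.conj_sub, r.norm_conj]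

lemma RealStructure.conj_injective (r : RealStructure A) : Function.Injective r.conj := by
  intro x y h
  have := congrArg r.conj h
  rwa [r.invol, r.invol] at this

lemma pairConj_continuous (rA : RealStructure A) (rB : RealStructure B) :
    Continuous (pairConj rA rB) := by
  unfold pairConj
  exact ((rA.isometry_conj.continuous.comp continuous_fst).prodMk
    ((rB.isometry_conj.continuous.comp continuous_snd).neg))

lemma pairConj_injective (rA : RealStructure A) (rB : RealStructure B) :
    Function.Injective (pairConj rA rB) := by
  intro p q h
  unfold pairConj at h
  have h1 := congrArg Prod.fst h
  have h2 := congrArg Prod.snd h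
  simp only at h1 h2
  have ha : p.1 = q.1 := rA.conj_injective h1
  have hb : p.2 = q.2 := rB.conj_injective (neg_injective h2)
  exact Prod.ext ha hb

lemma lagrangian_isClosed (rA : RealStructure A) (rB : RealStructure B)
    (L : Submodule ℂ (A × B)) (h : IsLagrangianPair rA rB L) :
    IsClosed (L : Set (A × B)) := by
  have hS : IsClosed {y : A × B | ∀ x ∈ L, pairInner x y = 0} := by
    have heq : {y : A × B | ∀ x ∈ L, pairInner x y = 0}
        = ⋂ x ∈ (L : Set (A × B)), {y : A × B | pairInner x y = 0} := by
      ext y; simp [Set.mem_iInter]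
    rw [heq]
    refine isClosed_biInter fun x _ => isClosed_eq ?_ continuous_const
    have : Continuous fun y : A × B => (inner ℂ x.1 y.1 : ℂ) + (inner ℂ x.2 y.2 : ℂ) :=
      (Continuous.inner continuous_const continuous_fst).add
        (Continuous.inner continuous_const continuous_snd)
    exact this
  have hL : (L : Set (A × B))
      = pairConj rA rB ⁻¹' {y : A × B | ∀ x ∈ L, pairInner x y = 0} := by
    rw [← h, Set.preimage_image_eq _ (pairConj_injective rA rB)]
  rw [hL]
  exact hS.preimage (pairConj_continuous rA rB)

/-- `(ker T)ᗮ = closure (range T†)`. -/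
lemma orthogonal_ker_eq_closure_range_adjoint {H K : Type*}
    [NormedAddCommGroup H] [InnerProductSpace ℂ H] [CompleteSpace H]
    [NormedAddCommGroup K] [InnerProductSpace ℂ K] [CompleteSpace K] (T : H →L[ℂ] K) :
    (LinearMap.ker (T : H →ₗ[ℂ] K))ᗮ = (LinearMap.range ((ContinuousLinearMap.adjoint T : K →L[ℂ] H) : K →ₗ[ℂ] H)).topologicalClosure := by
  have h1 : (LinearMap.range ((ContinuousLinearMap.adjoint T : K →L[ℂ] H) : K →ₗ[ℂ] H))ᗮ = LinearMap.ker (T : H →ₗ[ℂ] K) := by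
    ext x
    rw [Submodule.mem_orthogonal, LinearMap.mem_ker, ContinuousLinearMap.coe_coe]
    constructor
    · intro h
      refine ext_inner_left ℂ fun v => ?_
      rw [inner_zero_right, ← ContinuousLinearMap.adjoint_inner_left]
      exact h _ ⟨v, rfl⟩
    · rintro h u ⟨v, rfl⟩
      rw [ContinuousLinearMap.coe_coe, ContinuousLinearMap.adjoint_inner_left, h, inner_zero_right]
  rw [← h1, Submodule.orthogonal_orthogonal_eq_closure]

end Aux

variable {W₀ W₁ W₂ : Type*}
  [NormedAddCommGroup W₀] [InnerProductSpace ℂ W₀] [CompleteSpace W₀]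
  [NormedAddCommGroup W₁] [InnerProductSpace ℂ W₁] [CompleteSpace W₁]
  [NormedAddCommGroup W₂] [InnerProductSpace ℂ W₂] [CompleteSpace W₂]

/-- The Hermitian inner product of `W = W₀ ⊕ (−W₁) ⊕ W₁ ⊕ (−W₂)`. -/
def innerE (x y : (W₀ × W₁) × (W₁ × W₂)) : ℂ :=
  pairInner x.1 y.1 + pairInner x.2 y.2

/-- The set of orthogonal projections onto the (closed) subspace `C` of elements of `S`. -/
def projSet (C S : Set ((W₀ × W₁) × (W₁ × W₂))) : Set ((W₀ × W₁) × (W₁ × W₂)) :=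
  {p | p ∈ C ∧ ∃ u ∈ S, ∀ x ∈ C, innerE (u - p) x = 0}

/-- The ambient space with its `L²` Hilbert structure. -/
def Esp (W₀ W₁ W₂ : Type*) [NormedAddCommGroup W₀] [InnerProductSpace ℂ W₀]
    [NormedAddCommGroup W₁] [InnerProductSpace ℂ W₁]
    [NormedAddCommGroup W₂] [InnerProductSpace ℂ W₂] : Type _ :=
  (W₀ × W₁) × (W₁ × W₂)

instance : AddCommGroup (Esp W₀ W₁ W₂) := inferInstanceAs (AddCommGroup ((W₀ × W₁) × (W₁ × W₂)))

instance : Module ℂ (Esp W₀ W₁ W₂) := inferInstanceAs (Module ℂ ((W₀ × W₁) × (W₁ × W₂)))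

def toE : Esp W₀ W₁ W₂ →ₗ[ℂ] WithLp 2 (WithLp 2 (W₀ × W₁) × WithLp 2 (W₁ × W₂)) where
  toFun x := WithLp.toLp 2 (WithLp.toLp 2 x.1, WithLp.toLp 2 x.2)
  map_add' _ _ := rfl
  map_smul' _ _ := rfl

lemma toE_injective : Function.Injective (toE : Esp W₀ W₁ W₂ →ₗ[ℂ] _) := by
  intro x y h
  have h' := congrArg (fun z => ((WithLp.ofLp z).1.ofLp, (WithLp.ofLp z).2.ofLp)) h
  exact h'

instance : NormedAddCommGroup (Esp W₀ W₁ W₂) :=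
  NormedAddCommGroup.induced _ _ (toE : Esp W₀ W₁ W₂ →ₗ[ℂ] _) toE_injective

instance : InnerProductSpace ℂ (Esp W₀ W₁ W₂) :=
  InnerProductSpace.induced (toE : Esp W₀ W₁ W₂ →ₗ[ℂ] _)

lemma toE_isometry : Isometry (toE : Esp W₀ W₁ W₂ →ₗ[ℂ] _) :=
  AddMonoidHomClass.isometry_of_norm _ (fun _ => rfl)

instance : CompleteSpace (Esp W₀ W₁ W₂) := by
  refine (toE_isometry.isUniformInducing.completeSpace_congr ?_).2 inferInstance
  intro z
  exact ⟨((z.ofLp.1.ofLp), (z.ofLp.2.ofLp)), rfl⟩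

lemma continuous_ofE :
    Continuous (fun x : Esp W₀ W₁ W₂ => @id ((W₀ × W₁) × (W₁ × W₂)) x) := by
  have h2 := ((WithLp.prod_continuous_ofLp 2 W₀ W₁).comp
      (continuous_fst.comp (WithLp.prod_continuous_ofLp 2 (WithLp 2 (W₀ × W₁))
        (WithLp 2 (W₁ × W₂))))).prodMk
    ((WithLp.prod_continuous_ofLp 2 W₁ W₂).comp
      (continuous_snd.comp (WithLp.prod_continuous_ofLp 2 (WithLp 2 (W₀ × W₁))
        (WithLp 2 (W₁ × W₂)))))
  exact h2.comp toE_isometry.continuous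

set_option linter.unusedSectionVars false
set_option maxHeartbeats 1600000
set_option synthInstance.maxHeartbeats 400000

lemma innerE_eq (x y : (W₀ × W₁) × (W₁ × W₂)) :
    innerE x y = (@inner ℂ (Esp W₀ W₁ W₂) _ x y : ℂ) := rfl

lemma esp_topology_eq :
    (UniformSpace.toTopologicalSpace : TopologicalSpace (Esp W₀ W₁ W₂))
      = (instTopologicalSpaceProd : TopologicalSpace ((W₀ × W₁) × (W₁ × W₂))) := by
  apply le_antisymm
  · exact continuous_id_iff_le.mp continuous_ofE
  · have hc : @Continuous ((W₀ × W₁) × (W₁ × W₂)) (Esp W₀ W₁ W₂) _ _ (@id (Esp W₀ W₁ W₂)) := by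
      refine toE_isometry.isEmbedding.continuous_iff.mpr ?_
      exact (WithLp.prod_continuous_toLp 2 _ _).comp
        (((WithLp.prod_continuous_toLp 2 W₀ W₁).comp continuous_fst).prodMk
          ((WithLp.prod_continuous_toLp 2 W₁ W₂).comp continuous_snd))
    exact continuous_id_iff_le.mp hc

/-- `σ : W → W₁` as a continuous linear map. -/
def sigmaCLM : Esp W₀ W₁ W₂ →L[ℂ] W₁ where
  toFun := fun x => x.1.2 - x.2.1
  map_add' := fun x y => by
    show (x.1.2 + y.1.2) - (x.2.1 + y.2.1) = _
    abel
  map_smul' := fun c x => by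
    show c • x.1.2 - c • x.2.1 = c • (x.1.2 - x.2.1)
    rw [smul_sub]
  cont := by
    refine Continuous.sub ?_ ?_
    · exact ((continuous_snd.comp continuous_fst).comp continuous_ofE : Continuous fun x : Esp W₀ W₁ W₂ => x.1.2)
    · exact ((continuous_fst.comp continuous_snd).comp continuous_ofE : Continuous fun x : Esp W₀ W₁ W₂ => x.2.1)

/-- The element `((0, -v), (v, 0))` of `W`. -/
def ubarE (v : W₁) : Esp W₀ W₁ W₂ := ((0, -v), (v, 0))

lemma ubarE_inner (v : W₁) (x : Esp W₀ W₁ W₂) :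
    (inner ℂ (ubarE v) x : ℂ) = inner ℂ (-v) (x.1.2 - x.2.1) := by
  show ((inner ℂ (0:W₀) x.1.1 : ℂ) + inner ℂ (-v) x.1.2)
      + ((inner ℂ v x.2.1 : ℂ) + inner ℂ (0:W₂) x.2.2) = _
  rw [inner_zero_left, inner_zero_left, inner_sub_right, inner_neg_left, inner_neg_left]
  ring

/-- With `L = L₀₁ ⊕ L₁₂`, `U = {(0,w,w,0)}`, `Ū` its conjugate and
`L_σ = ker σ ∩ L`: the set `P_L(Ū)` is orthogonal to `L_σ`, and its closure equals
`L_σ^⊥ ∩ L`. -/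
theorem projection_dense_in_Lsigma_perp
    (r₀ : RealStructure W₀) (r₁ : RealStructure W₁) (r₂ : RealStructure W₂)
    (L01 : Submodule ℂ (W₀ × W₁)) (L12 : Submodule ℂ (W₁ × W₂))
    (h01 : IsLagrangianPair r₀ r₁ L01) (h12 : IsLagrangianPair r₁ r₂ L12) :
    -- L = L₀₁ ⊕ L₁₂ ⊆ W, L_σ = ker σ ∩ L, Ū = conjugate of U = {(0,w,w,0) : w ∈ W₁}
    let L : Set ((W₀ × W₁) × (W₁ × W₂)) := (L01.prod L12 : Set ((W₀ × W₁) × (W₁ × W₂)))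
    let Lσ : Set ((W₀ × W₁) × (W₁ × W₂)) := {x ∈ L | x.1.2 = x.2.1}
    let Ubar : Set ((W₀ × W₁) × (W₁ × W₂)) :=
      {x | ∃ w : W₁, x = ((0, -r₁.conj w), (r₁.conj w, 0))}
    (∀ p ∈ projSet L Ubar, ∀ q ∈ Lσ, innerE p q = 0) ∧
    closure (projSet L Ubar) = {x | x ∈ L ∧ ∀ q ∈ Lσ, innerE x q = 0} := by
  intro L Lσ Ubar
  -- L as a closed subspace of the Hilbert space E
  let L' : Submodule ℂ (Esp W₀ W₁ W₂) := L01.prod L12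
  have hL'closed : IsClosed (L' : Set (Esp W₀ W₁ W₂)) := by
    have h1 := lagrangian_isClosed r₀ r₁ L01 h01
    have h2 := lagrangian_isClosed r₁ r₂ L12 h12
    exact ((h1.prod h2).preimage continuous_ofE : _)
  haveI : CompleteSpace L' := hL'closed.completeSpace_coe
  -- σ restricted to L' and its adjoint
  let T : L' →L[ℂ] W₁ := (sigmaCLM).comp L'.subtypeL
  let Tadj : W₁ →L[ℂ] L' := ContinuousLinearMap.adjoint T
  let Rng : Submodule ℂ L' := LinearMap.range (Tadj : W₁ →ₗ[ℂ] L')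
  let Kker : Submodule ℂ L' := LinearMap.ker (T : L' →ₗ[ℂ] W₁)
  have hTadj_inner : ∀ (v : W₁) (x : L'),
      (inner ℂ (Tadj v) x : ℂ)
        = inner ℂ v ((x : Esp W₀ W₁ W₂).1.2 - (x : Esp W₀ W₁ W₂).2.1) := by
    intro v x
    rw [ContinuousLinearMap.adjoint_inner_left]
    rfl
  have hmemL' : ∀ x ∈ L, x ∈ L' := fun x hx => hx
  -- projSet = image of the range of Tadj
  have hproj : projSet L Ubar = Subtype.val '' (Rng : Set L') := by
    ext p
    constructor
    · rintro ⟨hpL, u, ⟨w, rfl⟩, hperp⟩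
      refine ⟨⟨p, hpL⟩, ⟨-(r₁.conj w), ?_⟩, rfl⟩
      have hdiff : ∀ x : L',
          (inner ℂ ((Tadj (-(r₁.conj w)) - ⟨p, hpL⟩ : L')) x : ℂ) = 0 := by
        intro x
        rw [inner_sub_left, hTadj_inner]
        have h0 := hperp (x : Esp W₀ W₁ W₂) x.2
        erw [innerE_eq, inner_sub_left] at h0
        -- h0 : ⟪u, x⟫ - ⟪p, x⟫ = 0 in E
        have hu : (inner ℂ (ubarE (r₁.conj w) : Esp W₀ W₁ W₂) (x : Esp W₀ W₁ W₂) : ℂ)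
            = inner ℂ (-(r₁.conj w)) ((x : Esp W₀ W₁ W₂).1.2 - (x : Esp W₀ W₁ W₂).2.1) :=
          ubarE_inner (r₁.conj w) (x : Esp W₀ W₁ W₂)
        have hp' : (inner ℂ ((⟨p, hpL⟩ : L')) x : ℂ)
            = @inner ℂ (Esp W₀ W₁ W₂) _ p (x : Esp W₀ W₁ W₂) := rfl
        rw [← hu, hp']
        exact h0
      have h := hdiff (Tadj (-(r₁.conj w)) - ⟨p, hpL⟩)
      replace h := (inner_self_eq_zero (𝕜 := ℂ) (E := L')).mp h
      exact sub_eq_zero.mp h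
    · rintro ⟨x', ⟨v, rfl⟩, rfl⟩
      refine ⟨(Tadj v).2, ?_⟩
      have hcw : r₁.conj (r₁.conj (-v)) = -v := r₁.invol _
      refine ⟨((0, -r₁.conj (r₁.conj (-v))), (r₁.conj (r₁.conj (-v)), 0)),
        ⟨r₁.conj (-v), rfl⟩, ?_⟩
      intro x hx
      rw [hcw]
      -- now the Ubar element is ((0, v), (-v, 0)) = ubarE (-v)
      erw [innerE_eq, inner_sub_left]
      have hu : (inner ℂ (ubarE (-v) : Esp W₀ W₁ W₂) (x : Esp W₀ W₁ W₂) : ℂ)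
          = inner ℂ v ((x : Esp W₀ W₁ W₂).1.2 - (x : Esp W₀ W₁ W₂).2.1) := by
        have := ubarE_inner (-v) (x : Esp W₀ W₁ W₂)
        rwa [neg_neg] at this
      have ht : (inner ℂ ((Tadj v : L') : Esp W₀ W₁ W₂) (x : Esp W₀ W₁ W₂) : ℂ)
          = inner ℂ v ((x : Esp W₀ W₁ W₂).1.2 - (x : Esp W₀ W₁ W₂).2.1) :=
        hTadj_inner v ⟨x, hmemL' x hx⟩
      have hgoal : (inner ℂ (ubarE (-v) : Esp W₀ W₁ W₂) (x : Esp W₀ W₁ W₂) : ℂ)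
          - inner ℂ ((Tadj v : L') : Esp W₀ W₁ W₂) (x : Esp W₀ W₁ W₂) = 0 := by
        rw [hu, ht, sub_self]
      exact hgoal
  -- the right-hand side set = image of (ker T)ᗮ
  have hRHS : {x | x ∈ L ∧ ∀ q ∈ Lσ, innerE x q = 0}
      = Subtype.val '' ((Kkerᗮ : Submodule ℂ L') : Set L') := by
    ext x
    constructor
    · rintro ⟨hxL, hx⟩
      refine ⟨⟨x, hxL⟩, ?_, rfl⟩
      rw [SetLike.mem_coe, Submodule.mem_orthogonal]
      intro q hq
      have hq0 : T q = 0 := hq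
      have hqσ : (q : Esp W₀ W₁ W₂).1.2 = (q : Esp W₀ W₁ W₂).2.1 :=
        sub_eq_zero.mp hq0
      have h0 := hx (q : Esp W₀ W₁ W₂) ⟨q.2, hqσ⟩
      erw [innerE_eq] at h0
      have h1 : (inner ℂ (q : Esp W₀ W₁ W₂) (x : Esp W₀ W₁ W₂) : ℂ) = 0 :=
        inner_eq_zero_symm.mp h0
      exact h1
    · rintro ⟨x', hx', rfl⟩
      rw [SetLike.mem_coe, Submodule.mem_orthogonal] at hx'
      refine ⟨x'.2, ?_⟩
      intro q hq
      erw [innerE_eq]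
      have hq' : (⟨q, hmemL' q hq.1⟩ : L') ∈ Kker := by
        have : T (⟨q, hmemL' q hq.1⟩ : L') = 0 := by
          show q.1.2 - q.2.1 = 0
          rw [hq.2, sub_self]
        exact this
      have h5 : (inner ℂ ((⟨q, hmemL' q hq.1⟩ : L')) x' : ℂ) = 0 := hx' _ hq'
      have h6 : (inner ℂ ((x' : L') : Esp W₀ W₁ W₂) (q : Esp W₀ W₁ W₂) : ℂ) = 0 :=
        inner_eq_zero_symm.mp h5
      exact h6
  -- the density statement
  have h1 : closure (Subtype.val '' (Rng : Set L'))
      = Subtype.val '' closure (Rng : Set L') :=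
    (hL'closed.isClosedEmbedding_subtypeVal).closure_image_eq _
  have h2 : closure (Rng : Set L') = ((Kkerᗮ : Submodule ℂ L') : Set L') := by
    rw [← Submodule.topologicalClosure_coe]
    have hker := orthogonal_ker_eq_closure_range_adjoint (H := L') (K := W₁) T
    rw [hker]
  have hmain : closure (projSet L Ubar) = {x | x ∈ L ∧ ∀ q ∈ Lσ, innerE x q = 0} := by
    rw [hproj, hRHS]
    have hcl := h1.trans (congrArg (Set.image Subtype.val) h2)
    rwa [esp_topology_eq] at hcl
  refine ⟨?_, hmain⟩
  intro p hp q hq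
  have hmem : p ∈ closure (projSet L Ubar) := subset_closure hp
  rw [hmain] at hmem
  exact hmem.2 q hq
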